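/- Suppose H : ℕ → ℚ is a sequence and p an odd prime such that for all n, H satisfies the Hecke eigenvalue relation H(p²n) + χ_p(n)H(n) + p·H(n/p²) = (p+1)H(n) (where H(n/p²) is interpreted as 0 if p² ∤ n, and χ_p(n) = (-n/p) is the Legendre symbol at -n). Define H̃(n) = H(n) − χ_p(n)H(n) − p·H(n/p²). Then for all n, H̃(p²n) = H̃(n); that is, the power series H̃ = Σ H̃(n)qⁿ satisfies H̃|U² = H̃ for the operator U : Σa(n)qⁿ ↦ Σa(pn)qⁿ. -/
import Mathlib


/-- The modified series coefficients
`H̃(n) = H(n) − χ_p(n)H(n) − p·H(n/p²)`, where `χ_p(n) = (-n/p)` is the Legendre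
symbol and `H(n/p²)` is interpreted as `0` when `p² ∤ n`. -/
noncomputable def Htilde (p : ℕ) [Fact p.Prime] (H : ℕ → ℚ) (n : ℕ) : ℚ :=
  H n - (legendreSym p (-(n : ℤ)) : ℚ) * H n
    - p * (if p ^ 2 ∣ n then H (n / p ^ 2) else 0)

/-- If `H : ℕ → ℚ` satisfies the Hecke eigenvalue relation
`H(p²n) + χ_p(n)H(n) + p·H(n/p²) = (p+1)H(n)` for an odd prime `p`, then
`H̃(p²n) = H̃(n)` for all `n`; i.e. `H̃|U² = H̃`. -/
theorem Htilde_U_sq_eq_self (p : ℕ) [Fact p.Prime] (hodd : p ≠ 2) (H : ℕ → ℚ)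
    (hH : ∀ n : ℕ,
      H (p ^ 2 * n) + (legendreSym p (-(n : ℤ)) : ℚ) * H n
          + p * (if p ^ 2 ∣ n then H (n / p ^ 2) else 0) = (p + 1) * H n) :
    ∀ n : ℕ, Htilde p H (p ^ 2 * n) = Htilde p H n := by
  intro n
  have hp : 0 < p ^ 2 := pow_pos (Fact.out (p := p.Prime)).pos 2
  have hdvd : p ^ 2 ∣ p ^ 2 * n := Dvd.intro n rfl
  have hchi : legendreSym p (-(((p ^ 2 * n : ℕ) : ℤ))) = 0 := by
    rw [legendreSym.eq_zero_iff]
    push_cast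
    simp [ZMod.natCast_self]
  have hdiv : p ^ 2 * n / p ^ 2 = n := Nat.mul_div_cancel_left n hp
  have h := hH n
  simp only [Htilde, hchi, hdvd, if_pos, hdiv, Int.cast_zero, zero_mul, sub_zero]
  linarith [h]
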